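/- arXiv:2305.19008 — 2 statements merged into one kernel-verified Lean document; each statement's English description precedes it below -/
import Mathlib

section
/- For any real matrix A of rank r with singular values s_1 ≥ ... ≥ s_r > 0, the function L ↦ L · Σ_{i=1}^r s_i^(2/L) admits the asymptotic expansion L·r + 2·Σ_i log s_i + (2/L)·Σ_i (log s_i)^2 + O(L^{-2}) as L → ∞. -/
open Matrix Finset

/-- The singular values of a real matrix, listed in decreasing order (square roots of the
eigenvalues of `Aᵀ A`, sorted). -/
noncomputable def singularValues {m n : ℕ} (A : Matrix (Fin m) (Fin n) ℝ) : Fin n → ℝ :=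
  fun i => Real.sqrt (((show (Aᵀ * A).IsHermitian by
    simpa using Matrix.isHermitian_conjTranspose_mul_self A).eigenvalues ∘
    Tuple.sort ((show (Aᵀ * A).IsHermitian by
    simpa using Matrix.isHermitian_conjTranspose_mul_self A).eigenvalues)) i.rev)

/-- The `i`-th largest singular value (0-indexed), zero-padded beyond the matrix dimensions. -/
noncomputable def sval {m n : ℕ} (A : Matrix (Fin m) (Fin n) ℝ) (i : ℕ) : ℝ :=
  if h : i < n then singularValues A ⟨i, h⟩ else 0


/-- For a matrix `A` of rank `r` with nonzero singular values `s₁ ≥ … ≥ s_r > 0`, the map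
`L ↦ L·∑ᵢ sᵢ^{2/L}` expands as `L·r + 2∑ᵢ log sᵢ + (2/L)∑ᵢ (log sᵢ)² + O(L⁻²)` as `L → ∞`. -/
theorem stmt1 {m n r : ℕ} (A : Matrix (Fin m) (Fin n) ℝ) (hr : r ≤ n) (hrank : A.rank = r)
    (s : Fin r → ℝ) (hs : ∀ i, s i = singularValues A (Fin.castLE hr i))
    (hpos : ∀ i, 0 < s i) :
    ∃ C : ℝ, ∀ᶠ L : ℕ in Filter.atTop,
      |(L : ℝ) * ∑ i, s i ^ ((2 : ℝ) / L) -
        ((L : ℝ) * r + 2 * ∑ i, Real.log (s i)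
          + (2 / L) * ∑ i, (Real.log (s i)) ^ 2)| ≤ C / (L : ℝ) ^ 2 := by
  classical
  refine ⟨∑ i, 8 * |Real.log (s i)| ^ 3, ?_⟩
  filter_upwards [Filter.eventually_ge_atTop (⌈∑ j, 2 * |Real.log (s j)|⌉₊ + 1)] with L hL
  have hL1 : (1:ℕ) ≤ L := le_trans (Nat.le_add_left 1 _) hL
  have hLpos : (0:ℝ) < L := by exact_mod_cast hL1
  have hLsum : ∑ j, 2 * |Real.log (s j)| ≤ (L:ℝ) := by
    calc ∑ j, 2 * |Real.log (s j)| ≤ (⌈∑ j, 2 * |Real.log (s j)|⌉₊ : ℝ) := Nat.le_ceil _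
      _ ≤ (L : ℝ) := by exact_mod_cast le_trans (Nat.le_succ _) hL
  have key : ∀ i : Fin r,
      |(L:ℝ) * s i ^ ((2:ℝ)/L) - ((L:ℝ) + 2 * Real.log (s i) + (2/L) * (Real.log (s i))^2)|
        ≤ 8 * |Real.log (s i)| ^ 3 / (L:ℝ)^2 := by
    intro i
    set g := Real.log (s i) with hg
    have hgL : 2 * |g| ≤ (L:ℝ) :=
      le_trans (Finset.single_le_sum (f := fun j => 2 * |Real.log (s j)|)
        (fun j _ => by positivity) (Finset.mem_univ i)) hLsum
    set x := 2 * g / (L:ℝ) with hxdef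
    have hx1 : |x| ≤ 1 := by
      rw [hxdef, abs_div, abs_of_pos hLpos, div_le_one hLpos]
      calc |2 * g| = 2 * |g| := by rw [abs_mul, abs_two]
        _ ≤ (L:ℝ) := hgL
    have hexp := Real.exp_bound hx1 (n := 3) (by norm_num)
    have hsum3 : ∑ m ∈ range 3, x ^ m / (m.factorial : ℝ) = 1 + x + x^2/2 := by
      simp [Finset.sum_range_succ, Nat.factorial]
    rw [hsum3] at hexp
    have hrpow : s i ^ ((2:ℝ)/(L:ℝ)) = Real.exp x := by
      rw [Real.rpow_def_of_pos (hpos i), hxdef, hg]; ring_nf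
    have hne : (L:ℝ) ≠ 0 := hLpos.ne'
    have heq : (L:ℝ) * s i ^ ((2:ℝ)/L) - ((L:ℝ) + 2*g + (2/L)*g^2)
        = (L:ℝ) * (Real.exp x - (1 + x + x^2/2)) := by
      rw [hrpow, hxdef]; field_simp
    rw [heq, abs_mul, abs_of_pos hLpos]
    have hxcube : |x| ^ 3 = 8 * |g|^3 / (L:ℝ)^3 := by
      rw [hxdef, abs_div, abs_of_pos hLpos, abs_mul, abs_two, div_pow]; ring
    calc (L:ℝ) * |Real.exp x - (1 + x + x^2/2)|
        ≤ (L:ℝ) * (|x|^3 * ((3:ℕ).succ / ((3:ℕ).factorial * 3))) := by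
          exact mul_le_mul_of_nonneg_left hexp hLpos.le
      _ = (L:ℝ) * (8 * |g|^3 / (L:ℝ)^3) * (4/18) := by
          rw [hxcube]; norm_num [Nat.factorial]; ring
      _ ≤ (L:ℝ) * (8 * |g|^3 / (L:ℝ)^3) * 1 := by
          apply mul_le_mul_of_nonneg_left (by norm_num) (by positivity)
      _ = 8 * |g|^3 / (L:ℝ)^2 := by field_simp
  have expand : (L : ℝ) * ∑ i, s i ^ ((2 : ℝ) / L) -
        ((L : ℝ) * r + 2 * ∑ i, Real.log (s i) + (2 / L) * ∑ i, (Real.log (s i)) ^ 2)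
      = ∑ i : Fin r, ((L:ℝ) * s i ^ ((2:ℝ)/L)
          - ((L:ℝ) + 2 * Real.log (s i) + (2/L) * (Real.log (s i))^2)) := by
    simp only [Finset.sum_sub_distrib, Finset.sum_add_distrib, ← Finset.mul_sum,
      Finset.sum_const, Finset.card_univ, Fintype.card_fin, nsmul_eq_mul]
    ring
  rw [expand]
  calc |∑ i : Fin r, ((L:ℝ) * s i ^ ((2:ℝ)/L)
          - ((L:ℝ) + 2 * Real.log (s i) + (2/L) * (Real.log (s i))^2))|
      ≤ ∑ i : Fin r, |(L:ℝ) * s i ^ ((2:ℝ)/L)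
          - ((L:ℝ) + 2 * Real.log (s i) + (2/L) * (Real.log (s i))^2)| :=
        Finset.abs_sum_le_sum_abs _ _
    _ ≤ ∑ i : Fin r, 8 * |Real.log (s i)| ^ 3 / (L:ℝ)^2 :=
        Finset.sum_le_sum (fun i _ => key i)
    _ = (∑ i, 8 * |Real.log (s i)| ^ 3) / (L:ℝ)^2 := by rw [Finset.sum_div]
end

section
/- For any real matrix W and integer k ≤ min of its dimensions, with SVD W = U S V^T, let U_k, V_k denote the submatrices of the first k left/right singular vectors. Then ‖W − U_k V_k^T‖_F^2 ≤ ‖W‖_F^2 − k − 2 log|W|_k, where |W|_k is the product of the k largest singular values of W (assumed positive). -/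
open Matrix Finset

noncomputable def kDet {m n : ℕ} (A : Matrix (Fin m) (Fin n) ℝ) (k : ℕ) : ℝ :=
  ∏ i ∈ Finset.range k, sval A i

lemma frob_eq_trace {m n : ℕ} (A : Matrix (Fin m) (Fin n) ℝ) :
    ∑ i, ∑ j, (A i j) ^ 2 = (Aᵀ * A).trace := by
  simp only [Matrix.trace, Matrix.diag, Matrix.mul_apply, Matrix.transpose_apply, sq]
  rw [Finset.sum_comm]

lemma frob_conj {m n : ℕ} (U : Matrix (Fin m) (Fin m) ℝ) (V : Matrix (Fin n) (Fin n) ℝ)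
    (hU : Uᵀ * U = 1) (hV : Vᵀ * V = 1) (A : Matrix (Fin m) (Fin n) ℝ) :
    ((U * A * Vᵀ)ᵀ * (U * A * Vᵀ)).trace = (Aᵀ * A).trace := by
  have h1 : (U * A * Vᵀ)ᵀ * (U * A * Vᵀ) = V * ((Aᵀ * (Uᵀ * U) * A) * Vᵀ) := by
    simp [Matrix.transpose_mul, Matrix.mul_assoc]
  rw [h1, hU, Matrix.mul_one, Matrix.trace_mul_comm, Matrix.mul_assoc, hV, Matrix.mul_one]

lemma trace_diagLike {m n : ℕ} (f : ℕ → ℝ) :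
    (((Matrix.of fun (i : Fin m) (j : Fin n) => if (i : ℕ) = (j : ℕ) then f (j : ℕ) else 0)ᵀ *
      (Matrix.of fun (i : Fin m) (j : Fin n) => if (i : ℕ) = (j : ℕ) then f (j : ℕ) else 0)).trace)
      = ∑ j : Fin n, if (j : ℕ) < m then (f (j : ℕ)) ^ 2 else 0 := by
  simp only [Matrix.trace, Matrix.diag, Matrix.mul_apply, Matrix.transpose_apply,
    Matrix.of_apply]
  refine Finset.sum_congr rfl fun j _ => ?_
  by_cases h : (j : ℕ) < m
  · rw [if_pos h, Finset.sum_eq_single (⟨(j : ℕ), h⟩ : Fin m)]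
    · simp [sq]
    · intro i _ hi
      have : (i : ℕ) ≠ (j : ℕ) := by
        intro he; exact hi (Fin.ext he)
      simp [this]
    · simp
  · rw [if_neg h]
    apply Finset.sum_eq_zero
    intro i _
    have : (i : ℕ) ≠ (j : ℕ) := by omega
    simp [this]

/-- Given an SVD `W = U S Vᵀ`, the truncation `U_k V_kᵀ` (first `k` singular directions)
satisfies `‖W − U_k V_kᵀ‖_F² ≤ ‖W‖_F² − k − 2 log|W|_k`, provided the `k` largest singular
values of `W` are positive. -/
theorem stmt4 {m n k : ℕ} (hk : k ≤ min m n) (W : Matrix (Fin m) (Fin n) ℝ)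
    (U : Matrix (Fin m) (Fin m) ℝ) (V : Matrix (Fin n) (Fin n) ℝ)
    (hU : Uᵀ * U = 1) (hV : Vᵀ * V = 1)
    (hSVD : W = U * (Matrix.of fun (i : Fin m) (j : Fin n) =>
      if (i : ℕ) = (j : ℕ) then sval W i else 0) * Vᵀ)
    (hpos : ∀ i < k, 0 < sval W i) :
    ∑ i, ∑ j,
        ((W - U * (Matrix.of fun (i : Fin m) (j : Fin n) =>
          if (i : ℕ) = (j : ℕ) ∧ (i : ℕ) < k then (1 : ℝ) else 0) * Vᵀ) i j) ^ 2 ≤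
      (∑ i, ∑ j, (W i j) ^ 2) - k - 2 * Real.log (kDet W k) := by
  have hkm : k ≤ m := hk.trans (min_le_left _ _)
  have hkn : k ≤ n := hk.trans (min_le_right _ _)
  set s : ℕ → ℝ := sval W with hs
  -- the difference matrix
  have hdiff : W - U * (Matrix.of fun (i : Fin m) (j : Fin n) =>
      if (i : ℕ) = (j : ℕ) ∧ (i : ℕ) < k then (1 : ℝ) else 0) * Vᵀ
      = U * (Matrix.of fun (i : Fin m) (j : Fin n) =>
        if (i : ℕ) = (j : ℕ) then (s (j : ℕ) - if (j : ℕ) < k then 1 else 0) else 0) * Vᵀ := by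
    nth_rewrite 1 [hSVD]
    rw [← Matrix.sub_mul, ← Matrix.mul_sub]
    congr 2
    ext i j
    simp only [Matrix.sub_apply, Matrix.of_apply]
    by_cases h : (i : ℕ) = (j : ℕ)
    · by_cases h2 : (i : ℕ) < k <;> simp [h, h2]
    · simp [h]
  have hW : W = U * (Matrix.of fun (i : Fin m) (j : Fin n) =>
      if (i : ℕ) = (j : ℕ) then s (j : ℕ) else 0) * Vᵀ := by
    rw [hSVD]
    congr 2
    ext i j
    simp only [Matrix.of_apply]
    by_cases h : (i : ℕ) = (j : ℕ) <;> simp [h]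
  have hL : ∑ i, ∑ j,
        ((W - U * (Matrix.of fun (i : Fin m) (j : Fin n) =>
          if (i : ℕ) = (j : ℕ) ∧ (i : ℕ) < k then (1 : ℝ) else 0) * Vᵀ) i j) ^ 2
      = ∑ j : Fin n, if (j : ℕ) < m then (s (j : ℕ) - if (j : ℕ) < k then 1 else 0) ^ 2 else 0 := by
    rw [hdiff, frob_eq_trace, frob_conj U V hU hV,
      trace_diagLike (m := m) (n := n) (fun x => s x - if x < k then 1 else 0)]
  have hR : ∑ i, ∑ j, (W i j) ^ 2
      = ∑ j : Fin n, if (j : ℕ) < m then (s (j : ℕ)) ^ 2 else 0 := by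
    conv_lhs => rw [hW]
    rw [frob_eq_trace, frob_conj U V hU hV, trace_diagLike]
  rw [hL, hR]
  -- log of product
  have hlog : Real.log (kDet W k) = ∑ i ∈ Finset.range k, Real.log (s i) := by
    unfold kDet
    exact Real.log_prod fun i hi => (hpos i (Finset.mem_range.mp hi)).ne'
  rw [hlog]
  have hkey : (k : ℝ) + 2 * ∑ i ∈ Finset.range k, Real.log (s i)
      = ∑ j : Fin n, if (j : ℕ) < k then (1 + 2 * Real.log (s (j : ℕ))) else 0 := by
    rw [Fin.sum_univ_eq_sum_range (fun i => if i < k then (1 + 2 * Real.log (s i)) else 0) n,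
      Finset.sum_ite, Finset.sum_const_zero, add_zero]
    have : (Finset.range n).filter (· < k) = Finset.range k := by
      ext x; simp; omega
    rw [this, Finset.sum_add_distrib]
    simp [Finset.mul_sum]
  have : ∑ j : Fin n, (if (j : ℕ) < m then (s (j : ℕ)) ^ 2 else 0)
        - (k : ℝ) - 2 * ∑ i ∈ Finset.range k, Real.log (s i)
      = ∑ j : Fin n, ((if (j : ℕ) < m then (s (j : ℕ)) ^ 2 else 0)
        - (if (j : ℕ) < k then (1 + 2 * Real.log (s (j : ℕ))) else 0)) := by
    rw [Finset.sum_sub_distrib, ← hkey]; ring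
  rw [this]
  apply Finset.sum_le_sum
  intro j _
  by_cases hjk : (j : ℕ) < k
  · have hjm : (j : ℕ) < m := lt_of_lt_of_le hjk hkm
    rw [if_pos hjm, if_pos hjm, if_pos hjk, if_pos hjk]
    have hp : 0 < s (j : ℕ) := hpos _ hjk
    have hl := Real.log_le_sub_one_of_pos hp
    nlinarith [sq_nonneg (s (j : ℕ) - 1)]
  · rw [if_neg hjk, if_neg hjk, sub_zero]
    by_cases hjm : (j : ℕ) < m <;> simp [hjm]
end
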